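/- The map α restricted to a regular family Q with ⋃Q = A (excluding A itself from the domain if A ∈ Q) is injective: if q₁, q₂ ∈ Q with q₁ ≠ q₂ and both are proper subsets of A, then α(q₁) ≠ α(q₂). -/
import Mathlib


open Set

variable {A : Type*}

/-- A family `P` of subsets of `A` is *regular* (w.r.t. the choice-derived map `α`) if:
(1) it is linearly ordered by `⊆`; (2) every nonempty subfamily has a `⊆`-least element;
(3) `∅ ∈ P`; (4) every nonempty `p ∈ P` equals `p₁ ∪ {α p₁}` where `p₁ = ⋃ {q ∈ P : q ⊂ p}`. -/
def RegularFamily (α : Set A → A) (P : Set (Set A)) : Prop :=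
  (∀ p ∈ P, ∀ q ∈ P, p ⊆ q ∨ q ⊆ p) ∧
  (∀ γ ⊆ P, γ.Nonempty → ∃ m ∈ γ, ∀ x ∈ γ, m ⊆ x) ∧
  (∅ ∈ P) ∧
  (∀ p ∈ P, p.Nonempty →
    p = (⋃₀ {q ∈ P | q ⊂ p}) ∪ {α (⋃₀ {q ∈ P | q ⊂ p})})

/-- Any two regular families are mutually comparable elementwise. -/
lemma regular_comparable (α : Set A → A) {P₁ P₂ : Set (Set A)}
    (h₁ : RegularFamily α P₁) (h₂ : RegularFamily α P₂) :
    ∀ p ∈ P₁, ∀ q ∈ P₂, p ⊆ q ∨ q ⊆ p := by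
  by_contra h
  push_neg at h
  obtain ⟨p₀, hp₀, q₀, hq₀, hpq₁, hpq₂⟩ := h
  set B : Set (Set A) := {p ∈ P₁ | ∃ q ∈ P₂, ¬ p ⊆ q ∧ ¬ q ⊆ p} with hB
  obtain ⟨p, hpB, hpmin⟩ := h₁.2.1 B (fun x hx => hx.1) ⟨p₀, hp₀, q₀, hq₀, hpq₁, hpq₂⟩
  obtain ⟨hpP, q', hq', hpq'⟩ := hpB
  set C : Set (Set A) := {q ∈ P₂ | ¬ p ⊆ q ∧ ¬ q ⊆ p} with hC
  obtain ⟨q, hqC, hqmin⟩ := h₂.2.1 C (fun x hx => hx.1) ⟨q', hq', hpq'⟩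
  obtain ⟨hqP, hnpq, hnqp⟩ := hqC
  -- contributors below p are ⊆ q
  have hU1q : ∀ x ∈ P₁, x ⊂ p → x ⊆ q := by
    intro x hx hxp
    have hxB : x ∉ B := fun hxB => absurd (hpmin x hxB) (fun hsub => hxp.2 hsub)
    by_contra hxq
    exact hxB ⟨hx, q, hqP, hxq, fun hqx => hnqp (hqx.trans hxp.1)⟩
  have hU2p : ∀ y ∈ P₂, y ⊂ q → y ⊆ p := by
    intro y hy hyq
    have hyC : y ∉ C := fun hyC => absurd (hqmin y hyC) (fun hsub => hyq.2 hsub)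
    by_contra hyp
    exact hyC ⟨hy, fun hpy => hnpq (hpy.trans hyq.1), hyp⟩
  have hpne : p.Nonempty := by
    rcases eq_empty_or_nonempty p with h | h
    · exact absurd (h ▸ empty_subset q) hnpq
    · exact h
  have hqne : q.Nonempty := by
    rcases eq_empty_or_nonempty q with h | h
    · exact absurd (h ▸ empty_subset p) hnqp
    · exact h
  set U₁ := ⋃₀ {x ∈ P₁ | x ⊂ p} with hU₁
  set U₂ := ⋃₀ {y ∈ P₂ | y ⊂ q} with hU₂
  have hpeq : p = U₁ ∪ {α U₁} := h₁.2.2.2 p hpP hpne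
  have hqeq : q = U₂ ∪ {α U₂} := h₂.2.2.2 q hqP hqne
  have hU1subq : U₁ ⊆ q := by
    intro a ha; obtain ⟨x, ⟨hx, hxp⟩, hax⟩ := ha; exact hU1q x hx hxp hax
  have hU2subp : U₂ ⊆ p := by
    intro a ha; obtain ⟨y, ⟨hy, hyq⟩, hay⟩ := ha; exact hU2p y hy hyq hay
  have haU1 : α U₁ ∉ q := by
    intro h
    exact hnpq (hpeq ▸ union_subset hU1subq (singleton_subset_iff.2 h))
  have haU2 : α U₂ ∉ p := by
    intro h
    exact hnqp (hqeq ▸ union_subset hU2subp (singleton_subset_iff.2 h))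
  have hU1p : U₁ ⊆ p := hpeq ▸ subset_union_left
  have hU2q : U₂ ⊆ q := hqeq ▸ subset_union_left
  have h12 : U₁ ⊆ U₂ := by
    intro a ha
    have : a ∈ U₂ ∪ {α U₂} := hqeq ▸ hU1subq ha
    rcases this with h | h
    · exact h
    · exact absurd (mem_singleton_iff.1 h ▸ hU1p ha) haU2
  have h21 : U₂ ⊆ U₁ := by
    intro a ha
    have : a ∈ U₁ ∪ {α U₁} := hpeq ▸ hU2subp ha
    rcases this with h | h
    · exact h
    · exact absurd (mem_singleton_iff.1 h ▸ hU2q ha) haU1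
  have : U₁ = U₂ := Subset.antisymm h12 h21
  exact hnpq (le_of_eq (hpeq.trans (by rw [this, ← hqeq])))

/-- If `q₁ ⊂ q₂` with `q₁, q₂` in (possibly different) regular families, then `α q₁ ∈ q₂`. -/
lemma alpha_mem (α : Set A → A) {P₁ P₂ : Set (Set A)}
    (h₁ : RegularFamily α P₁) (h₂ : RegularFamily α P₂)
    {q₁ q₂ : Set A} (hq₁ : q₁ ∈ P₁) (hq₂ : q₂ ∈ P₂) (hss : q₁ ⊂ q₂) :
    α q₁ ∈ q₂ := by
  set γ : Set (Set A) := {x ∈ P₂ | q₁ ⊂ x} with hγ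
  obtain ⟨s, ⟨hsP, hq₁s⟩, hsmin⟩ := h₂.2.1 γ (fun x hx => hx.1) ⟨q₂, hq₂, hss⟩
  have hsq₂ : s ⊆ q₂ := hsmin q₂ ⟨hq₂, hss⟩
  have hsne : s.Nonempty := by
    obtain ⟨a, has, -⟩ := exists_of_ssubset hq₁s; exact ⟨a, has⟩
  set U := ⋃₀ {x ∈ P₂ | x ⊂ s} with hU
  have hseq : s = U ∪ {α U} := h₂.2.2.2 s hsP hsne
  have hUsub : U ⊆ q₁ := by
    intro a ha
    obtain ⟨x, ⟨hx, hxs⟩, hax⟩ := ha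
    rcases regular_comparable α h₁ h₂ q₁ hq₁ x hx with h | h
    · rcases h.ssubset_or_eq with h' | h'
      · exact absurd (hsmin x ⟨hx, h'⟩) (fun hs => hxs.2 hs)
      · exact h' ▸ hax
    · exact h hax
  have haUq₁ : α U ∉ q₁ := by
    intro h
    exact hq₁s.2 (hseq ▸ union_subset hUsub (singleton_subset_iff.2 h))
  have hq₁U : q₁ ⊆ U := by
    intro a ha
    have : a ∈ U ∪ {α U} := hseq ▸ hq₁s.1 ha
    rcases this with h | h
    · exact h
    · exact absurd (mem_singleton_iff.1 h ▸ ha) haUq₁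
  have hUeq : U = q₁ := Subset.antisymm hUsub hq₁U
  have : α U ∈ s := hseq ▸ mem_union_right _ rfl
  exact hsq₂ (hUeq ▸ this)

theorem alpha_injective
    (φ : Set A → A) (hφ : ∀ X : Set A, X.Nonempty → φ X ∈ X)
    (α : Set A → A) (hα : ∀ X : Set A, α X = φ Xᶜ)
    (Q : Set (Set A)) (hQdef : Q = {p : Set A | ∃ P : Set (Set A), RegularFamily α P ∧ p ∈ P})
    (q₁ q₂ : Set A) (hq₁ : q₁ ∈ Q) (hq₂ : q₂ ∈ Q)
    (h₁ : q₁ ⊂ Set.univ) (h₂ : q₂ ⊂ Set.univ) (hne : q₁ ≠ q₂) :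
    α q₁ ≠ α q₂ := by
  rw [hQdef] at hq₁ hq₂
  obtain ⟨P₁, hP₁, hm₁⟩ := hq₁
  obtain ⟨P₂, hP₂, hm₂⟩ := hq₂
  have notmem : ∀ X : Set A, X ⊂ Set.univ → α X ∉ X := by
    intro X hX hmem
    have hXc : Xᶜ.Nonempty := by
      rw [nonempty_compl]; exact hX.ne
    have := hφ Xᶜ hXc
    rw [← hα] at this
    exact this hmem
  intro heq
  rcases regular_comparable α hP₁ hP₂ q₁ hm₁ q₂ hm₂ with h | h
  · have hss : q₁ ⊂ q₂ := ⟨h, fun h' => hne (Subset.antisymm h h')⟩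
    have := alpha_mem α hP₁ hP₂ hm₁ hm₂ hss
    rw [heq] at this
    exact notmem q₂ h₂ this
  · have hss : q₂ ⊂ q₁ := ⟨h, fun h' => hne (Subset.antisymm h' h)⟩
    have := alpha_mem α hP₂ hP₁ hm₂ hm₁ hss
    rw [← heq] at this
    exact notmem q₁ h₁ this
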